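/- arXiv:2411.06641 — 5 statements merged into one kernel-verified Lean document; each statement's English description precedes it below -/
import Mathlib

section
/- Let d, n₁, n₂ be positive integers, let P₁ = (α₁,…,α_{n₁}) ∈ ℝ^{d×n₁} and P₂ = (β₁,…,β_{n₂}) ∈ ℝ^{d×n₂} be matrices whose columns each form a ℚ-linearly independent family, and let φ_p : ℝ^{n₁} → ℂ and ψ_p : ℝ^{n₂} → ℂ be 2π-periodic in each coordinate. Suppose γ₁,…,γ_{n₃} are chosen from among the vectors α₁,…,α_{n₁}, β₁,…,β_{n₂} so that γ₁,…,γ_{n₃} are ℚ-linearly independent and every α_i and every β_j is a ℚ-linear combination of γ₁,…,γ_{n₃}; set P = (γ₁,…,γ_{n₃}) ∈ ℝ^{d×n₃}. Then there exist a real number L > 0 and functions φ̌_p, ψ̌_p : ℝ^{n₃} → ℂ, each L-periodic in every coordinate, such that for all x ∈ ℝ^d one has φ_p(P₁ᵀx) = φ̌_p(Pᵀx) and ψ_p(P₂ᵀx) = ψ̌_p(Pᵀx); consequently φ_p(P₁ᵀx) + ψ_p(P₂ᵀx) = (φ̌_p + ψ̌_p)(Pᵀx) and φ_p(P₁ᵀx)·ψ_p(P₂ᵀx)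 = (φ̌_p·ψ̌_p)(Pᵀx) for all x ∈ ℝ^d. -/
open scoped Real


private lemma shift_int_one (n : ℕ) (f : (Fin n → ℝ) → ℂ) (T : ℝ)
    (hf : ∀ (y : Fin n → ℝ) (j : Fin n), f (fun i => y i + if i = j then T else 0) = f y)
    (y : Fin n → ℝ) (j : Fin n) (k : ℤ) :
    f (fun i => y i + if i = j then (k : ℝ) * T else 0) = f y := by
  induction k using Int.induction_on with
  | zero => simp
  | succ k ih =>
      have h := hf (fun i => y i + if i = j then (k : ℝ) * T else 0) j
      have harg : (fun i => (y i + if i = j then (k : ℝ) * T else 0) + if i = j then T else 0)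
          = fun i => y i + if i = j then ((k : ℤ) + 1 : ℝ) * T else 0 := by
        funext i
        by_cases hij : i = j
        · simp [hij]; push_cast; ring
        · simp [hij]
      rw [harg] at h
      calc f (fun i => y i + if i = j then (((k : ℤ) + 1 : ℤ) : ℝ) * T else 0)
          = f (fun i => y i + if i = j then ((k : ℤ) + 1 : ℝ) * T else 0) := by push_cast; rfl
        _ = f (fun i => y i + if i = j then (k : ℝ) * T else 0) := h
        _ = f y := ih
  | pred k ih =>
      have h := hf (fun i => y i + if i = j then (-(k : ℝ) - 1) * T else 0) j
      have harg : (fun i => (y i + if i = j then (-(k : ℝ) - 1) * T else 0) + if i = j then T else 0)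
          = fun i => y i + if i = j then (-(k : ℤ) : ℝ) * T else 0 := by
        funext i
        by_cases hij : i = j
        · simp [hij]; push_cast; ring
        · simp [hij]
      rw [harg] at h
      calc f (fun i => y i + if i = j then ((-(k : ℤ) - 1 : ℤ) : ℝ) * T else 0)
          = f (fun i => y i + if i = j then (-(k : ℝ) - 1) * T else 0) := by push_cast; rfl
        _ = f y := by rw [← h]; push_cast at ih ⊢; exact ih

private lemma shift_int (n : ℕ) (f : (Fin n → ℝ) → ℂ) (T : ℝ)
    (hf : ∀ (y : Fin n → ℝ) (j : Fin n), f (fun i => y i + if i = j then T else 0) = f y)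
    (y : Fin n → ℝ) (m : Fin n → ℤ) :
    f (fun i => y i + (m i : ℝ) * T) = f y := by
  have key : ∀ s : Finset (Fin n), ∀ y : Fin n → ℝ,
      f (fun i => y i + if i ∈ s then (m i : ℝ) * T else 0) = f y := by
    intro s
    induction s using Finset.induction_on with
    | empty => intro y; simp
    | @insert a s ha ih =>
        intro y
        have harg : (fun i => y i + if i ∈ insert a s then (m i : ℝ) * T else 0)
            = fun i => (y i + if i = a then (m i : ℝ) * T else 0)
                + if i ∈ s then (m i : ℝ) * T else 0 := by
          funext i
          by_cases h1 : i = a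
          · subst h1; simp [ha]
          · simp [h1, Finset.mem_insert]
        rw [harg]
        calc f (fun i => (y i + if i = a then (m i : ℝ) * T else 0)
                + if i ∈ s then (m i : ℝ) * T else 0)
            = f (fun i => y i + if i = a then (m i : ℝ) * T else 0) := ih _
          _ = f (fun i => y i + if i = a then (m a : ℝ) * T else 0) := by
              congr 1; funext i; by_cases h1 : i = a <;> simp [h1]
          _ = f y := shift_int_one n f T hf y a (m a)
  have h := key Finset.univ y
  simpa using h

private lemma rat_mul_nat_int (q : ℚ) (N : ℕ) (h : q.den ∣ N) :
    ∃ m : ℤ, (q : ℝ) * N = m := by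
  obtain ⟨k, hk⟩ := h
  refine ⟨q.num * k, ?_⟩
  have hden : (q.den : ℝ) ≠ 0 := Nat.cast_ne_zero.mpr q.den_nz
  have hq : (q : ℝ) = (q.num : ℝ) / (q.den : ℝ) := by
    rw [Rat.cast_def]
  rw [hq, hk]
  push_cast
  field_simp

/-- Proposition 1 of the paper: two quasiperiodic functions admit parent
functions over a common projection matrix built from a maximal ℚ-linearly
independent subfamily of the columns, and sums/products of quasiperiodic
functions have the corresponding sums/products as parent functions. -/
theorem common_parent_functions
    (d n₁ n₂ n₃ : ℕ) (hd : 0 < d) (hn₁ : 0 < n₁) (hn₂ : 0 < n₂)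
    (α : Fin n₁ → (Fin d → ℝ)) (β : Fin n₂ → (Fin d → ℝ)) (γ : Fin n₃ → (Fin d → ℝ))
    (hα : LinearIndependent ℚ α) (hβ : LinearIndependent ℚ β)
    (φp : (Fin n₁ → ℝ) → ℂ) (ψp : (Fin n₂ → ℝ) → ℂ)
    (hφp : ∀ (y : Fin n₁ → ℝ) (j : Fin n₁), φp (fun i => y i + if i = j then 2 * π else 0) = φp y)
    (hψp : ∀ (y : Fin n₂ → ℝ) (j : Fin n₂), ψp (fun i => y i + if i = j then 2 * π else 0) = ψp y)
    (hγ : LinearIndependent ℚ γ)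
    (hγmem : ∀ j : Fin n₃, (∃ i, γ j = α i) ∨ (∃ i, γ j = β i))
    (hαspan : ∀ i : Fin n₁, α i ∈ Submodule.span ℚ (Set.range γ))
    (hβspan : ∀ i : Fin n₂, β i ∈ Submodule.span ℚ (Set.range γ)) :
    ∃ L : ℝ, 0 < L ∧ ∃ φc ψc : (Fin n₃ → ℝ) → ℂ,
      (∀ (y : Fin n₃ → ℝ) (j : Fin n₃), φc (fun i => y i + if i = j then L else 0) = φc y) ∧
      (∀ (y : Fin n₃ → ℝ) (j : Fin n₃), ψc (fun i => y i + if i = j then L else 0) = ψc y) ∧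
      (∀ x : Fin d → ℝ,
        φp (fun i => ∑ l, α i l * x l) = φc (fun j => ∑ l, γ j l * x l)) ∧
      (∀ x : Fin d → ℝ,
        ψp (fun i => ∑ l, β i l * x l) = ψc (fun j => ∑ l, γ j l * x l)) ∧
      (∀ x : Fin d → ℝ,
        φp (fun i => ∑ l, α i l * x l) + ψp (fun i => ∑ l, β i l * x l)
          = φc (fun j => ∑ l, γ j l * x l) + ψc (fun j => ∑ l, γ j l * x l)) ∧
      (∀ x : Fin d → ℝ,
        φp (fun i => ∑ l, α i l * x l) * ψp (fun i => ∑ l, β i l * x l)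
          = φc (fun j => ∑ l, γ j l * x l) * ψc (fun j => ∑ l, γ j l * x l)) := by
  choose c hc using fun i => (Submodule.mem_span_range_iff_exists_fun ℚ).mp (hαspan i)
  choose e he using fun i => (Submodule.mem_span_range_iff_exists_fun ℚ).mp (hβspan i)
  set N : ℕ := (∏ i, ∏ j, (c i j).den) * (∏ i, ∏ j, (e i j).den) with hNdef
  have hNpos : 0 < N := by
    apply Nat.mul_pos <;>
      exact Finset.prod_pos fun i _ => Finset.prod_pos fun j _ => (by positivity)
  have hcdvd : ∀ i j, (c i j).den ∣ N := fun i j =>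
    dvd_mul_of_dvd_left
      ((Finset.dvd_prod_of_mem (fun j' => (c i j').den) (Finset.mem_univ j)).trans
        (Finset.dvd_prod_of_mem (fun i' => ∏ j', (c i' j').den) (Finset.mem_univ i))) _
  have hedvd : ∀ i j, (e i j).den ∣ N := fun i j =>
    dvd_mul_of_dvd_right
      ((Finset.dvd_prod_of_mem (fun j' => (e i j').den) (Finset.mem_univ j)).trans
        (Finset.dvd_prod_of_mem (fun i' => ∏ j', (e i' j').den) (Finset.mem_univ i))) _
  choose mα hmα using fun i j => rat_mul_nat_int (c i j) N (hcdvd i j)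
  choose mβ hmβ using fun i j => rat_mul_nat_int (e i j) N (hedvd i j)
  set L : ℝ := 2 * π * N with hLdef
  have hLpos : 0 < L := by
    have := Real.pi_pos
    have : (0:ℝ) < N := by exact_mod_cast hNpos
    positivity
  have hvalφ : ∀ x : Fin d → ℝ,
      φp (fun i => ∑ l, α i l * x l)
        = φp (fun i => ∑ j, (c i j : ℝ) * ∑ l, γ j l * x l) := by
    intro x
    congr 1
    funext i
    have hαl : ∀ l, α i l = ∑ j, (c i j : ℝ) * γ j l := by
      intro l
      have h := congrFun (hc i) l
      simpa [Finset.sum_apply, Rat.smul_def] using h.symm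
    calc ∑ l, α i l * x l
        = ∑ l, (∑ j, (c i j : ℝ) * γ j l) * x l :=
          Finset.sum_congr rfl fun l _ => by rw [← hαl l]
      _ = ∑ l, ∑ j, (c i j : ℝ) * (γ j l * x l) := by
          refine Finset.sum_congr rfl fun l _ => ?_
          rw [Finset.sum_mul]
          exact Finset.sum_congr rfl fun j _ => by ring
      _ = ∑ j, ∑ l, (c i j : ℝ) * (γ j l * x l) := Finset.sum_comm
      _ = ∑ j, (c i j : ℝ) * ∑ l, γ j l * x l := by
          exact Finset.sum_congr rfl fun j _ => (Finset.mul_sum _ _ _).symm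
  have hvalψ : ∀ x : Fin d → ℝ,
      ψp (fun i => ∑ l, β i l * x l)
        = ψp (fun i => ∑ j, (e i j : ℝ) * ∑ l, γ j l * x l) := by
    intro x
    congr 1
    funext i
    have hβl : ∀ l, β i l = ∑ j, (e i j : ℝ) * γ j l := by
      intro l
      have h := congrFun (he i) l
      simpa [Finset.sum_apply, Rat.smul_def] using h.symm
    calc ∑ l, β i l * x l
        = ∑ l, (∑ j, (e i j : ℝ) * γ j l) * x l :=
          Finset.sum_congr rfl fun l _ => by rw [← hβl l]
      _ = ∑ l, ∑ j, (e i j : ℝ) * (γ j l * x l) := by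
          refine Finset.sum_congr rfl fun l _ => ?_
          rw [Finset.sum_mul]
          exact Finset.sum_congr rfl fun j _ => by ring
      _ = ∑ j, ∑ l, (e i j : ℝ) * (γ j l * x l) := Finset.sum_comm
      _ = ∑ j, (e i j : ℝ) * ∑ l, γ j l * x l := by
          exact Finset.sum_congr rfl fun j _ => (Finset.mul_sum _ _ _).symm
  refine ⟨L, hLpos,
    (fun z => φp (fun i => ∑ j, (c i j : ℝ) * z j)),
    (fun z => ψp (fun i => ∑ j, (e i j : ℝ) * z j)), ?_, ?_, ?_, ?_, ?_, ?_⟩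
  · -- periodicity of φc
    intro y k
    have harg : (fun i => ∑ j, (c i j : ℝ) * (y j + if j = k then L else 0))
        = fun i => (∑ j, (c i j : ℝ) * y j) + ((mα i k : ℝ)) * (2 * π) := by
      funext i
      have h1 : ∑ j, (c i j : ℝ) * (y j + if j = k then L else 0)
          = (∑ j, (c i j : ℝ) * y j) + (c i k : ℝ) * L := by
        simp [mul_add, Finset.sum_add_distrib, mul_ite, mul_zero]
      have h2 : (c i k : ℝ) * L = (mα i k : ℝ) * (2 * π) := by
        rw [hLdef, ← hmα i k]; ring
      rw [h1, h2]
    show φp _ = φp _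
    rw [harg]
    exact shift_int n₁ φp (2 * π) hφp _ (fun i => mα i k)
  · intro y k
    have harg : (fun i => ∑ j, (e i j : ℝ) * (y j + if j = k then L else 0))
        = fun i => (∑ j, (e i j : ℝ) * y j) + ((mβ i k : ℝ)) * (2 * π) := by
      funext i
      have h1 : ∑ j, (e i j : ℝ) * (y j + if j = k then L else 0)
          = (∑ j, (e i j : ℝ) * y j) + (e i k : ℝ) * L := by
        simp [mul_add, Finset.sum_add_distrib, mul_ite, mul_zero]
      have h2 : (e i k : ℝ) * L = (mβ i k : ℝ) * (2 * π) := by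
        rw [hLdef, ← hmβ i k]; ring
      rw [h1, h2]
    show ψp _ = ψp _
    rw [harg]
    exact shift_int n₂ ψp (2 * π) hψp _ (fun i => mβ i k)
  · -- value equality for φ
    exact hvalφ
  · exact hvalψ
  · intro x
    exact congrArg₂ (· + ·) (hvalφ x) (hvalψ x)
  · intro x
    exact congrArg₂ (· * ·) (hvalφ x) (hvalψ x)
end

section
/- Let V, θ ∈ ℝ, let c ∈ ℂ, and let φ : ℝ → ℂ be differentiable with φ'(t) = −i (V + θ|φ(t)|²) φ(t) for all t and φ(0) = c. Then φ(t) = e^{−i t (V + θ|c|²)} · c for all t ∈ ℝ. -/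
/-- The exact solution of the potential subproblem `φ' = -i(V + θ|φ|²)φ`,
`φ(0) = c`, is the nonlinear phase flow `φ(t) = e^{-it(V + θ|c|²)} c`. -/
theorem potential_flow_solution
    (V θ : ℝ) (c : ℂ) (φ : ℝ → ℂ)
    (hφ : ∀ t : ℝ,
      HasDerivAt φ (-Complex.I * ((V : ℂ) + (θ : ℂ) * ((‖φ t‖ : ℝ) : ℂ) ^ 2) * φ t) t)
    (h0 : φ 0 = c) :
    ∀ t : ℝ,
      φ t = Complex.exp (-Complex.I * (t : ℂ) * ((V : ℂ) + (θ : ℂ) * ((‖c‖ : ℝ) : ℂ) ^ 2)) * c := by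
  -- Step 1: the modulus is conserved.
  have hmod : ∀ t : ℝ, ((‖φ t‖ : ℝ) : ℂ) ^ 2 = ((‖c‖ : ℝ) : ℂ) ^ 2 := by
    set g : ℝ → ℂ := fun t => φ t * (starRingEnd ℂ) (φ t) with hg
    have hgd : ∀ t : ℝ, HasDerivAt g 0 t := by
      intro t
      have h1 := (hφ t).mul (hφ t).star
      convert h1 using 1
      · rfl
      · rfl
      have : star (-Complex.I * ((V : ℂ) + (θ : ℂ) * ((‖φ t‖ : ℝ) : ℂ) ^ 2) * φ t)
          = (Complex.I * ((V : ℂ) + (θ : ℂ) * ((‖φ t‖ : ℝ) : ℂ) ^ 2)) * star (φ t) := by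
        simp [star_mul', mul_comm, mul_assoc, mul_left_comm]
      rw [this]
      ring
    have hconst : ∀ t : ℝ, g t = g 0 := by
      intro t
      have : ∀ x : ℝ, deriv g x = 0 := fun x => (hgd x).deriv
      have hdiff : Differentiable ℝ g := fun x => (hgd x).differentiableAt
      exact is_const_of_deriv_eq_zero hdiff this t 0
    intro t
    have := hconst t
    simpa [g, Complex.mul_conj', h0] using this
  -- Step 2: constant-coefficient linear ODE.
  set k : ℂ := -Complex.I * ((V : ℂ) + (θ : ℂ) * ((‖c‖ : ℝ) : ℂ) ^ 2) with hk
  have hφ' : ∀ t : ℝ, HasDerivAt φ (k * φ t) t := by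
    intro t
    have := hφ t
    rwa [hmod t] at this
  set ψ : ℝ → ℂ := fun t => Complex.exp (-((t : ℂ) * k)) * φ t with hψ
  have hψd : ∀ t : ℝ, HasDerivAt ψ 0 t := by
    intro t
    have he : HasDerivAt (fun t : ℝ => Complex.exp (-((t : ℂ) * k)))
        (-k * Complex.exp (-((t : ℂ) * k))) t := by
      have h1 : HasDerivAt (fun t : ℝ => -((t : ℂ) * k)) (-k) t := by
        have := ((Complex.ofRealCLM.hasDerivAt (x := t)).mul_const k).neg
        simp at this
        exact this
      simpa [mul_comm] using h1.cexp
    have := he.mul (hφ' t)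
    convert this using 1
    · rfl
    · rfl
    ring
  have hψconst : ∀ t : ℝ, ψ t = ψ 0 := by
    intro t
    exact is_const_of_deriv_eq_zero (fun x => (hψd x).differentiableAt)
      (fun x => (hψd x).deriv) t 0
  intro t
  have h1 := hψconst t
  have h2 : ψ 0 = c := by simp [ψ, h0]
  rw [h2] at h1
  have : φ t = Complex.exp ((t : ℂ) * k) * c := by
    have := congrArg (fun z => Complex.exp ((t : ℂ) * k) * z) h1
    simpa [ψ, ← Complex.exp_add, mul_assoc, mul_left_comm, mul_comm] using this
  rw [this, hk]
  ring_nf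
end

section
/- Let n be a positive integer, α > n/4, and θ ∈ ℝ. There exists a constant C > 0, depending only on n and α, such that the following holds. Let p, q, r : ℤ^n → ℂ have finite X_α-norms, and define the (absolutely convergent) functions φ_p(y) = Σ_k p_k e^{ik·y}, ψ_p(y) = Σ_k q_k e^{ik·y}, and ϕ_p(y) = Σ_k r_k e^{ik·y} on ℝ^n. Then ‖θ(|φ_p|² − |ψ_p|²) ϕ_p‖ ≤ C |θ| (‖p‖_{X_α} + ‖q‖_{X_α}) ‖r‖_{X_α} ‖φ_p − ψ_p‖. -/
open MeasureTheory
open scoped Real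

/-- The `X_α`-norm of a family of Fourier coefficients. -/
noncomputable def XalphaNorm (n : ℕ) (α : ℝ) (c : (Fin n → ℤ) → ℂ) : ℝ :=
  Real.sqrt (∑' k : Fin n → ℤ,
    (1 + Real.sqrt (∑ j, ((k j : ℝ)) ^ 2) ^ (4 * α)) * ‖c k‖ ^ 2)

/-- The Fourier series with coefficients `c`. -/
noncomputable def fourierSeries (n : ℕ) (c : (Fin n → ℤ) → ℂ) (y : Fin n → ℝ) : ℂ :=
  ∑' k : Fin n → ℤ, c k * Complex.exp (Complex.I * ((∑ j, (k j : ℝ) * y j : ℝ) : ℂ))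

/-- The normalized `L²` norm of a `2π`-periodic function over one period cell. -/
noncomputable def L2NormPeriodic (n : ℕ) (f : (Fin n → ℝ) → ℂ) : ℝ :=
  Real.sqrt ((((2 * π) ^ n)⁻¹ : ℝ) *
    ∫ y in Set.Icc (0 : Fin n → ℝ) (fun _ => 2 * π), ‖f y‖ ^ 2)

/- ### Auxiliary lemmas -/

/-- The weight in the `X_α` norm. -/
noncomputable def wgt (n : ℕ) (α : ℝ) (k : Fin n → ℤ) : ℝ :=
  1 + Real.sqrt (∑ j, ((k j : ℝ)) ^ 2) ^ (4 * α)

lemma one_le_wgt (n : ℕ) (α : ℝ) (k : Fin n → ℤ) : 1 ≤ wgt n α k := by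
  have : (0:ℝ) ≤ Real.sqrt (∑ j, ((k j : ℝ)) ^ 2) ^ (4 * α) :=
    Real.rpow_nonneg (Real.sqrt_nonneg _) _
  unfold wgt; linarith

lemma wgt_pos (n : ℕ) (α : ℝ) (k : Fin n → ℤ) : 0 < wgt n α k :=
  lt_of_lt_of_le one_pos (one_le_wgt n α k)

/-- 1-dimensional summability. -/
lemma summable_int_aux {β : ℝ} (hβ : 1 < 2 * β) :
    Summable (fun m : ℤ => ((1 + (m : ℝ) ^ 2) ^ β)⁻¹) := by
  have hβ0 : 0 ≤ β := by nlinarith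
  have hnat : Summable (fun m : ℕ => ((1 + (m : ℝ) ^ 2) ^ β)⁻¹) := by
    have h1 : Summable (fun m : ℕ => 1 / ((m : ℝ) + 1) ^ (2 * β)) := by
      have := (summable_nat_add_iff (f := fun m : ℕ => 1 / (m : ℝ) ^ (2 * β)) 1).2
        (Real.summable_one_div_nat_rpow.mpr hβ)
      simpa using this
    refine Summable.of_nonneg_of_le (fun m => by positivity) (fun m => ?_)
      (h1.mul_left (2 ^ β))
    have hm0 : (0:ℝ) ≤ (m:ℝ) := Nat.cast_nonneg m
    have key : ((m:ℝ) + 1) ^ (2 * β) ≤ 2 ^ β * (1 + (m : ℝ) ^ 2) ^ β := by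
      have h2 : ((m:ℝ) + 1) ^ (2*β) = (((m:ℝ) + 1) ^ (2:ℕ)) ^ β := by
        rw [← Real.rpow_natCast ((m:ℝ)+1) 2, ← Real.rpow_mul (by positivity)]
        norm_num
      rw [h2, ← Real.mul_rpow (by norm_num) (by positivity)]
      refine Real.rpow_le_rpow (by positivity) ?_ hβ0
      nlinarith [sq_nonneg ((m:ℝ) - 1)]
    rw [mul_one_div, le_div_iff₀ (by positivity), inv_mul_eq_div,
      div_le_iff₀ (by positivity)]
    exact key
  refine Summable.of_nat_of_neg ?_ ?_ <;> · push_cast; simpa using hnat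

/-- Summability of products over `Fin n → ℤ`. -/
lemma summable_pi_prod {f : ℤ → ℝ} (hf0 : ∀ m, 0 ≤ f m) (hf : Summable f) (n : ℕ) :
    Summable (fun k : Fin n → ℤ => ∏ j, f (k j)) := by
  induction n with
  | zero =>
    have : Finite (Fin 0 → ℤ) := inferInstance
    exact Summable.of_finite
  | succ n ih =>
    have h := hf.mul_of_nonneg ih hf0
      (fun k => Finset.prod_nonneg fun j _ => hf0 _)
    have h2 := (((Fin.consEquiv (fun _ : Fin (n+1) => ℤ)).symm).summable_iff
      (f := fun x : ℤ × (Fin n → ℤ) => f x.1 * ∏ j, f (x.2 j))).2 h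
    refine h2.congr fun k => ?_
    show f (k 0) * (∏ j, f (Fin.tail k j)) = ∏ j, f (k j)
    rw [Fin.prod_univ_succ]
    rfl

/-- Summability of the inverse weights when `α > n/4`. -/
lemma summable_inv_wgt {n : ℕ} (hn : 0 < n) {α : ℝ} (hα : (n : ℝ) / 4 < α) :
    Summable (fun k : Fin n → ℤ => (wgt n α k)⁻¹) := by
  set β : ℝ := 2 * α / n with hβdef
  have hn' : (0:ℝ) < n := by exact_mod_cast hn
  have hβ : 1 < 2 * β := by
    have h4 : (n:ℝ) < 4 * α := by
      have := (div_lt_iff₀ (by norm_num : (0:ℝ) < 4)).1 hα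
      linarith
    rw [hβdef, ← mul_div_assoc, lt_div_iff₀ hn']
    nlinarith
  have hβ0 : 0 ≤ β := by nlinarith
  have hα0 : 0 < α := lt_of_le_of_lt (by positivity) hα
  have hf := summable_int_aux hβ
  have hprod := summable_pi_prod (f := fun m : ℤ => ((1 + (m : ℝ) ^ 2) ^ β)⁻¹)
    (fun m => inv_nonneg.2 (Real.rpow_nonneg (by positivity) _)) hf n
  refine Summable.of_nonneg_of_le (fun k => inv_nonneg.2 (wgt_pos n α k).le) (fun k => ?_)
    (hprod.mul_left (2 ^ (2 * α)))
  -- key pointwise bound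
  set s : ℝ := ∑ j, ((k j : ℝ)) ^ 2 with hs
  have hs0 : 0 ≤ s := Finset.sum_nonneg fun j _ => sq_nonneg _
  have hsq : Real.sqrt s ^ 2 = s := Real.sq_sqrt hs0
  -- ∏ (1+kj²)^β ≤ (1+s)^(2α)
  have hP : (∏ j, ((1 + ((k j : ℝ)) ^ 2) ^ β)) ≤ (1 + s) ^ (2 * α) := by
    have h1 : (∏ j, ((1 + ((k j : ℝ)) ^ 2) ^ β)) = (∏ j, (1 + ((k j : ℝ)) ^ 2)) ^ β :=
      Real.finset_prod_rpow _ _ (fun j _ => by positivity) β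
    have h2 : (∏ j, (1 + ((k j : ℝ)) ^ 2)) ≤ (1 + s) ^ n := by
      have hle : ∀ j : Fin n, (1 + ((k j : ℝ)) ^ 2) ≤ 1 + s := by
        intro j
        have : ((k j : ℝ)) ^ 2 ≤ s := Finset.single_le_sum
          (f := fun j : Fin n => ((k j : ℝ)) ^ 2) (fun i _ => sq_nonneg _)
          (Finset.mem_univ j)
        linarith
      calc (∏ j, (1 + ((k j : ℝ)) ^ 2)) ≤ ∏ _j : Fin n, (1 + s) :=
            Finset.prod_le_prod (fun j _ => by positivity) (fun j _ => hle j)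
        _ = (1 + s) ^ n := by rw [Finset.prod_const, Finset.card_univ, Fintype.card_fin]
    have h3 : ((∏ j, (1 + ((k j : ℝ)) ^ 2)) : ℝ) ^ β ≤ ((1 + s) ^ n) ^ β :=
      Real.rpow_le_rpow (Finset.prod_nonneg fun j _ => by positivity) h2 hβ0
    have h4 : ((1 + s) ^ n : ℝ) ^ β = (1 + s) ^ (2 * α) := by
      rw [← Real.rpow_natCast (1 + s) n, ← Real.rpow_mul (by linarith)]
      congr 1
      field_simp [hβdef]
      rw [hβdef, mul_div_assoc', mul_div_cancel_left₀ _ hn'.ne']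
    rw [h1]; rw [h4] at h3; exact h3
  have hW : (1 + s) ^ (2 * α) ≤ 2 ^ (2 * α) * wgt n α k := by
    have hw : wgt n α k = 1 + Real.sqrt s ^ (4 * α) := rfl
    have ht4 : Real.sqrt s ^ (4 * α) = s ^ (2 * α) := by
      rw [← hsq, ← Real.rpow_natCast (Real.sqrt s) 2, ← Real.rpow_mul (Real.sqrt_nonneg _)]
      norm_num; ring_nf
    rcases le_total s 1 with h | h
    · have : (1 + s) ^ (2*α) ≤ (2:ℝ) ^ (2*α) :=
        Real.rpow_le_rpow (by linarith) (by linarith) (by positivity)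
      have h1 : (1:ℝ) ≤ wgt n α k := one_le_wgt n α k
      nlinarith [Real.rpow_nonneg (le_of_lt (by norm_num : (0:ℝ) < 2)) (2*α)]
    · have h1 : (1 + s) ^ (2*α) ≤ (2 * s) ^ (2*α) :=
        Real.rpow_le_rpow (by linarith) (by linarith) (by positivity)
      have h2 : ((2:ℝ) * s) ^ (2*α) = 2 ^ (2*α) * s ^ (2*α) :=
        Real.mul_rpow (by norm_num) hs0
      have h3 : s ^ (2*α) ≤ wgt n α k := by
        rw [hw, ht4]; linarith [Real.rpow_nonneg hs0 (2*α)]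
      calc (1 + s) ^ (2*α) ≤ 2 ^ (2*α) * s ^ (2*α) := by rw [← h2]; exact h1
        _ ≤ 2 ^ (2*α) * wgt n α k := by
            have : (0:ℝ) ≤ (2:ℝ) ^ (2*α) := Real.rpow_nonneg (by norm_num) _
            nlinarith
  -- now invert
  have hPpos : 0 < ∏ j, ((1 + ((k j : ℝ)) ^ 2) ^ β) :=
    Finset.prod_pos fun j _ => Real.rpow_pos_of_pos (by positivity) _
  have hprodinv : (∏ j, (((1 + ((k j : ℝ)) ^ 2) ^ β)⁻¹)) =
      (∏ j, ((1 + ((k j : ℝ)) ^ 2) ^ β))⁻¹ := by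
    rw [← Finset.prod_inv_distrib]
  rw [hprodinv]
  have hPW : (∏ j, ((1 + ((k j : ℝ)) ^ 2) ^ β)) ≤ 2 ^ (2*α) * wgt n α k := hP.trans hW
  have hkey : (wgt n α k)⁻¹ * (∏ j, ((1 + ((k j : ℝ)) ^ 2) ^ β)) ≤ 2 ^ (2*α) := by
    rw [inv_mul_eq_div, div_le_iff₀ (wgt_pos n α k)]
    linarith
  calc (wgt n α k)⁻¹
      = (wgt n α k)⁻¹ * (∏ j, ((1 + ((k j : ℝ)) ^ 2) ^ β)) *
        (∏ j, ((1 + ((k j : ℝ)) ^ 2) ^ β))⁻¹ := by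
        rw [mul_assoc, mul_inv_cancel₀ (ne_of_gt hPpos), mul_one]
    _ ≤ 2 ^ (2*α) * (∏ j, ((1 + ((k j : ℝ)) ^ 2) ^ β))⁻¹ :=
        mul_le_mul_of_nonneg_right hkey (by positivity)

/-- Cauchy–Schwarz for tsums of nonnegative reals. -/
lemma tsum_cauchy_schwarz {ι : Type*} {f g : ι → ℝ} (hf0 : ∀ i, 0 ≤ f i)
    (hg0 : ∀ i, 0 ≤ g i) (hf : Summable (fun i => f i ^ 2))
    (hg : Summable (fun i => g i ^ 2)) :
    Summable (fun i => f i * g i) ∧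
      ∑' i, f i * g i ≤ Real.sqrt (∑' i, f i ^ 2) * Real.sqrt (∑' i, g i ^ 2) := by
  have hbound : ∀ u : Finset ι, ∑ i ∈ u, f i * g i ≤
      Real.sqrt (∑' i, f i ^ 2) * Real.sqrt (∑' i, g i ^ 2) := by
    intro u
    refine (Real.sum_mul_le_sqrt_mul_sqrt u f g).trans ?_
    have h1 : ∑ i ∈ u, f i ^ 2 ≤ ∑' i, f i ^ 2 :=
      Summable.sum_le_tsum u (fun i _ => sq_nonneg _) hf
    have h2 : ∑ i ∈ u, g i ^ 2 ≤ ∑' i, g i ^ 2 :=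
      Summable.sum_le_tsum u (fun i _ => sq_nonneg _) hg
    exact mul_le_mul (Real.sqrt_le_sqrt h1) (Real.sqrt_le_sqrt h2)
      (Real.sqrt_nonneg _) (Real.sqrt_nonneg _)
  have hs : Summable (fun i => f i * g i) :=
    summable_of_sum_le (fun i => mul_nonneg (hf0 i) (hg0 i)) hbound
  exact ⟨hs, Summable.tsum_le_of_sum_le hs hbound⟩

/-- `ℓ¹` bound for coefficients with finite `X_α` norm. -/
lemma coeff_l1 {n : ℕ} {α : ℝ} (hw : Summable (fun k : Fin n → ℤ => (wgt n α k)⁻¹))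
    (c : (Fin n → ℤ) → ℂ)
    (hc : Summable (fun k : Fin n → ℤ => wgt n α k * ‖c k‖ ^ 2)) :
    Summable (fun k => ‖c k‖) ∧
      ∑' k, ‖c k‖ ≤ Real.sqrt (∑' k : Fin n → ℤ, (wgt n α k)⁻¹) * XalphaNorm n α c := by
  set f : (Fin n → ℤ) → ℝ := fun k => Real.sqrt ((wgt n α k)⁻¹) with hf
  set g : (Fin n → ℤ) → ℝ := fun k => Real.sqrt (wgt n α k) * ‖c k‖ with hg
  have h2 : ∀ k, f k ^ 2 = (wgt n α k)⁻¹ := fun k =>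
    Real.sq_sqrt (inv_nonneg.2 (wgt_pos n α k).le)
  have h3 : ∀ k, g k ^ 2 = wgt n α k * ‖c k‖ ^ 2 := by
    intro k
    rw [hg, mul_pow, Real.sq_sqrt (wgt_pos n α k).le]
  have h1 : ∀ k, f k * g k = ‖c k‖ := by
    intro k
    rw [hf, hg, ← mul_assoc, ← Real.sqrt_mul (inv_nonneg.2 (wgt_pos n α k).le),
      inv_mul_cancel₀ (ne_of_gt (wgt_pos n α k)), Real.sqrt_one, one_mul]
  have hfsq : Summable (fun k => f k ^ 2) := by
    simpa only [funext h2] using hw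
  have hgsq : Summable (fun k => g k ^ 2) := by
    simpa only [funext h3] using hc
  obtain ⟨hs, hle⟩ := tsum_cauchy_schwarz (fun k => Real.sqrt_nonneg _)
    (fun k => mul_nonneg (Real.sqrt_nonneg _) (norm_nonneg _)) hfsq hgsq
  have hsum : Summable (fun k => ‖c k‖) := by
    exact hs.congr h1
  refine ⟨hsum, ?_⟩
  have e1 : ∑' k, ‖c k‖ = ∑' k, f k * g k := by
    exact (tsum_congr h1).symm
  have e2 : (∑' k, f k ^ 2) = ∑' k : Fin n → ℤ, (wgt n α k)⁻¹ := tsum_congr h2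
  have e3 : (∑' k, g k ^ 2) = ∑' k : Fin n → ℤ, wgt n α k * ‖c k‖ ^ 2 := tsum_congr h3
  have hX : XalphaNorm n α c = Real.sqrt (∑' k : Fin n → ℤ, wgt n α k * ‖c k‖ ^ 2) := rfl
  rw [e1, hX, ← e2, ← e3]
  exact hle

/-- Norm bound for the terms of the Fourier series. -/
lemma fourier_term_norm {n : ℕ} (c : (Fin n → ℤ) → ℂ) (y : Fin n → ℝ) (k : Fin n → ℤ) :
    ‖c k * Complex.exp (Complex.I * ((∑ j, (k j : ℝ) * y j : ℝ) : ℂ))‖ = ‖c k‖ := by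
  rw [norm_mul]
  have : ‖Complex.exp (Complex.I * ((∑ j, (k j : ℝ) * y j : ℝ) : ℂ))‖ = 1 := by
    rw [Complex.norm_exp]
    simp
  rw [this, mul_one]

/-- Sup bound for the Fourier series. -/
lemma fourier_sup {n : ℕ} (c : (Fin n → ℤ) → ℂ) (hc : Summable (fun k => ‖c k‖))
    (y : Fin n → ℝ) : ‖fourierSeries n c y‖ ≤ ∑' k, ‖c k‖ := by
  have h : Summable (fun k : Fin n → ℤ =>
      ‖c k * Complex.exp (Complex.I * ((∑ j, (k j : ℝ) * y j : ℝ) : ℂ))‖) := by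
    simpa only [funext (fourier_term_norm c y)] using hc
  calc ‖fourierSeries n c y‖
      ≤ ∑' k, ‖c k * Complex.exp (Complex.I * ((∑ j, (k j : ℝ) * y j : ℝ) : ℂ))‖ :=
        norm_tsum_le_tsum_norm h
    _ = ∑' k, ‖c k‖ := tsum_congr (fourier_term_norm c y)

/-- Continuity of the Fourier series. -/
lemma fourier_continuous {n : ℕ} (c : (Fin n → ℤ) → ℂ)
    (hc : Summable (fun k => ‖c k‖)) : Continuous (fourierSeries n c) := by
  refine continuous_tsum (fun k => ?_) hc (fun k y => le_of_eq (fourier_term_norm c y k))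
  exact continuous_const.mul (Complex.continuous_exp.comp (continuous_const.mul
    (Complex.continuous_ofReal.comp (continuous_finset_sum _ fun j _ =>
      continuous_const.mul (continuous_apply j)))))

/-- Monotonicity of the periodic `L²` norm under a pointwise bound. -/
lemma L2_mono {n : ℕ} {f g : (Fin n → ℝ) → ℂ} {M : ℝ} (hM : 0 ≤ M)
    (hg : Continuous g) (h : ∀ y, ‖f y‖ ≤ M * ‖g y‖) :
    L2NormPeriodic n f ≤ M * L2NormPeriodic n g := by
  have hgint : IntegrableOn (fun y => M ^ 2 * ‖g y‖ ^ 2)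
      (Set.Icc (0 : Fin n → ℝ) (fun _ => 2 * π)) volume :=
    ((continuous_const.mul (hg.norm.pow 2)).integrableOn_Icc)
  have hI : ∫ y in Set.Icc (0 : Fin n → ℝ) (fun _ => 2 * π), ‖f y‖ ^ 2
      ≤ ∫ y in Set.Icc (0 : Fin n → ℝ) (fun _ => 2 * π), M ^ 2 * ‖g y‖ ^ 2 := by
    refine integral_mono_of_nonneg (Filter.Eventually.of_forall fun y => sq_nonneg _)
      hgint (Filter.Eventually.of_forall fun y => ?_)
    have := h y
    have h2 : ‖f y‖ ^ 2 ≤ (M * ‖g y‖) ^ 2 :=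
      pow_le_pow_left₀ (norm_nonneg _) this 2
    calc ‖f y‖ ^ 2 ≤ (M * ‖g y‖) ^ 2 := h2
      _ = M ^ 2 * ‖g y‖ ^ 2 := by ring
  have hIc : ∫ y in Set.Icc (0 : Fin n → ℝ) (fun _ => 2 * π), M ^ 2 * ‖g y‖ ^ 2
      = M ^ 2 * ∫ y in Set.Icc (0 : Fin n → ℝ) (fun _ => 2 * π), ‖g y‖ ^ 2 :=
    integral_const_mul _ _
  unfold L2NormPeriodic
  have hc0 : (0:ℝ) ≤ (((2 * π) ^ n)⁻¹ : ℝ) := by positivity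
  calc Real.sqrt ((((2 * π) ^ n)⁻¹ : ℝ) *
        ∫ y in Set.Icc (0 : Fin n → ℝ) (fun _ => 2 * π), ‖f y‖ ^ 2)
      ≤ Real.sqrt ((((2 * π) ^ n)⁻¹ : ℝ) * (M ^ 2 *
        ∫ y in Set.Icc (0 : Fin n → ℝ) (fun _ => 2 * π), ‖g y‖ ^ 2)) := by
        apply Real.sqrt_le_sqrt
        exact mul_le_mul_of_nonneg_left (hI.trans (le_of_eq hIc)) hc0
    _ = M * Real.sqrt ((((2 * π) ^ n)⁻¹ : ℝ) *
        ∫ y in Set.Icc (0 : Fin n → ℝ) (fun _ => 2 * π), ‖g y‖ ^ 2) := by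
        rw [show (((2 * π) ^ n)⁻¹ : ℝ) * (M ^ 2 *
            ∫ y in Set.Icc (0 : Fin n → ℝ) (fun _ => 2 * π), ‖g y‖ ^ 2)
          = M ^ 2 * ((((2 * π) ^ n)⁻¹ : ℝ) *
            ∫ y in Set.Icc (0 : Fin n → ℝ) (fun _ => 2 * π), ‖g y‖ ^ 2) from by ring,
          Real.sqrt_mul (sq_nonneg M), Real.sqrt_sq hM]

/-- For `α > n/4`: the difference bound
`‖θ(|φ_p|² − |ψ_p|²)ϕ_p‖ ≤ C|θ|(‖p‖_{X_α} + ‖q‖_{X_α})‖r‖_{X_α}‖φ_p − ψ_p‖`,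
where `φ_p, ψ_p, ϕ_p` are the Fourier series of `p, q, r`. -/
theorem nonlinear_potential_difference_bound
    (n : ℕ) (hn : 0 < n) (α : ℝ) (hα : (n : ℝ) / 4 < α) (θ : ℝ) :
    ∃ C : ℝ, 0 < C ∧
      ∀ p q r : (Fin n → ℤ) → ℂ,
        Summable (fun k : Fin n → ℤ =>
          (1 + Real.sqrt (∑ j, ((k j : ℝ)) ^ 2) ^ (4 * α)) * ‖p k‖ ^ 2) →
        Summable (fun k : Fin n → ℤ =>
          (1 + Real.sqrt (∑ j, ((k j : ℝ)) ^ 2) ^ (4 * α)) * ‖q k‖ ^ 2) →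
        Summable (fun k : Fin n → ℤ =>
          (1 + Real.sqrt (∑ j, ((k j : ℝ)) ^ 2) ^ (4 * α)) * ‖r k‖ ^ 2) →
        L2NormPeriodic n (fun y =>
            (θ : ℂ) * (((‖fourierSeries n p y‖ : ℝ) : ℂ) ^ 2 -
              ((‖fourierSeries n q y‖ : ℝ) : ℂ) ^ 2) * fourierSeries n r y)
          ≤ C * |θ| * (XalphaNorm n α p + XalphaNorm n α q) * XalphaNorm n α r *
              L2NormPeriodic n (fun y => fourierSeries n p y - fourierSeries n q y) := by
  have hα0 : 0 < α := lt_of_le_of_lt (by positivity) hα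
  have hw : Summable (fun k : Fin n → ℤ => (wgt n α k)⁻¹) := summable_inv_wgt hn hα
  set S : ℝ := ∑' k : Fin n → ℤ, (wgt n α k)⁻¹ with hSdef
  have hS0 : 0 < S := by
    refine Summable.tsum_pos hw (fun k => inv_nonneg.2 (wgt_pos n α k).le) 0 ?_
    have h1 : wgt n α (0 : Fin n → ℤ) = 1 := by
      unfold wgt
      norm_num [Real.zero_rpow (by positivity : (4 * α) ≠ 0)]
    rw [h1]; norm_num
  set A : ℝ := Real.sqrt S with hAdef
  have hA0 : 0 < A := Real.sqrt_pos.2 hS0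
  refine ⟨A * A, mul_pos hA0 hA0, ?_⟩
  intro p q r hp hq hr
  obtain ⟨hpl1, hpb⟩ := coeff_l1 hw p hp
  obtain ⟨hql1, hqb⟩ := coeff_l1 hw q hq
  obtain ⟨hrl1, hrb⟩ := coeff_l1 hw r hr
  set Xp := XalphaNorm n α p with hXp
  set Xq := XalphaNorm n α q with hXq
  set Xr := XalphaNorm n α r with hXr
  have hXp0 : 0 ≤ Xp := Real.sqrt_nonneg _
  have hXq0 : 0 ≤ Xq := Real.sqrt_nonneg _
  have hXr0 : 0 ≤ Xr := Real.sqrt_nonneg _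
  have hsupP : ∀ y, ‖fourierSeries n p y‖ ≤ A * Xp :=
    fun y => (fourier_sup p hpl1 y).trans hpb
  have hsupQ : ∀ y, ‖fourierSeries n q y‖ ≤ A * Xq :=
    fun y => (fourier_sup q hql1 y).trans hqb
  have hsupR : ∀ y, ‖fourierSeries n r y‖ ≤ A * Xr :=
    fun y => (fourier_sup r hrl1 y).trans hrb
  have hgcont : Continuous (fun y => fourierSeries n p y - fourierSeries n q y) :=
    (fourier_continuous p hpl1).sub (fourier_continuous q hql1)
  set M : ℝ := |θ| * ((A * Xp + A * Xq) * (A * Xr)) with hMdef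
  have hM0 : 0 ≤ M := by
    apply mul_nonneg (abs_nonneg θ)
    apply mul_nonneg
    · have := hA0.le; nlinarith
    · exact mul_nonneg hA0.le hXr0
  have hpt : ∀ y, ‖(θ : ℂ) * (((‖fourierSeries n p y‖ : ℝ) : ℂ) ^ 2 -
      ((‖fourierSeries n q y‖ : ℝ) : ℂ) ^ 2) * fourierSeries n r y‖
      ≤ M * ‖fourierSeries n p y - fourierSeries n q y‖ := by
    intro y
    set a : ℝ := ‖fourierSeries n p y‖ with ha
    set b : ℝ := ‖fourierSeries n q y‖ with hb
    have ha0 : 0 ≤ a := norm_nonneg _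
    have hb0 : 0 ≤ b := norm_nonneg _
    have hnorm : ‖(θ : ℂ) * (((a : ℝ) : ℂ) ^ 2 - ((b : ℝ) : ℂ) ^ 2) * fourierSeries n r y‖
        = |θ| * (|a ^ 2 - b ^ 2| * ‖fourierSeries n r y‖) := by
      rw [norm_mul, norm_mul, mul_assoc]
      congr 2
      · rw [Complex.norm_real, Real.norm_eq_abs]
      · rw [show (((a : ℝ) : ℂ) ^ 2 - ((b : ℝ) : ℂ) ^ 2) = ((a ^ 2 - b ^ 2 : ℝ) : ℂ) from by
          push_cast; ring, Complex.norm_real, Real.norm_eq_abs]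
    rw [hnorm]
    have hab : |a - b| ≤ ‖fourierSeries n p y - fourierSeries n q y‖ :=
      abs_norm_sub_norm_le _ _
    have hD : |a ^ 2 - b ^ 2| ≤ (A * Xp + A * Xq) *
        ‖fourierSeries n p y - fourierSeries n q y‖ := by
      have h1 : |a ^ 2 - b ^ 2| = (a + b) * |a - b| := by
        rw [show a ^ 2 - b ^ 2 = (a + b) * (a - b) from by ring, abs_mul,
          abs_of_nonneg (by linarith)]
      rw [h1]
      apply mul_le_mul _ hab (abs_nonneg _) _
      · have := hsupP y
        have := hsupQ y
        rw [← ha, ← hb] at *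
        linarith
      · have := hA0.le; nlinarith
    have hR : ‖fourierSeries n r y‖ ≤ A * Xr := hsupR y
    have h2 : |a ^ 2 - b ^ 2| * ‖fourierSeries n r y‖ ≤
        ((A * Xp + A * Xq) * ‖fourierSeries n p y - fourierSeries n q y‖) * (A * Xr) :=
      mul_le_mul hD hR (norm_nonneg _)
        (mul_nonneg (by nlinarith [hA0.le]) (norm_nonneg _))
    calc |θ| * (|a ^ 2 - b ^ 2| * ‖fourierSeries n r y‖)
        ≤ |θ| * (((A * Xp + A * Xq) * ‖fourierSeries n p y - fourierSeries n q y‖)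
          * (A * Xr)) := mul_le_mul_of_nonneg_left h2 (abs_nonneg θ)
      _ = M * ‖fourierSeries n p y - fourierSeries n q y‖ := by rw [hMdef]; ring
  have hmain := L2_mono hM0 hgcont hpt
  refine hmain.trans (le_of_eq ?_)
  rw [hMdef]; ring
end

section
/- Let n be a positive integer and α > n/4. There exists a constant C > 0, depending only on n and α, such that for all u, w : ℤ^n → ℂ with ‖u‖_{X_α} < ∞ and ‖w‖_{X_α} < ∞, the convolution (u * w)_k = Σ_{j∈ℤ^n} u_j w_{k−j} is well defined for every k ∈ ℤ^n and satisfies ‖u * w‖_{X_α} ≤ C ‖u‖_{X_α} ‖w‖_{X_α}; that is, Σ_{k∈ℤ^n} (1+‖k‖₂^{4α}) |Σ_{j∈ℤ^n} u_j w_{k−j}|² ≤ C² (Σ_{k} (1+‖k‖₂^{4α})|u_k|²)(Σ_{k} (1+‖k‖₂^{4α})|w_k|²). -/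
set_option maxHeartbeats 1000000
open scoped ENNReal

open scoped ENNReal

lemma enn_mul_le_sq_add_sq (a b : ℝ≥0∞) : a * b ≤ a ^ 2 + b ^ 2 := by
  rcases le_total a b with h | h
  · calc a * b ≤ b * b := mul_le_mul_left h b
    _ = b ^ 2 := (sq b).symm
    _ ≤ a ^ 2 + b ^ 2 := le_add_self
  · calc a * b ≤ a * a := mul_le_mul_right h a
    _ = a ^ 2 := (sq a).symm
    _ ≤ a ^ 2 + b ^ 2 := le_add_of_nonneg_right zero_le

lemma enn_sq_add_le (x y : ℝ≥0∞) : (x + y) ^ 2 ≤ 4 * (x ^ 2 + y ^ 2) := by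
  have h : x * y ≤ x ^ 2 + y ^ 2 := enn_mul_le_sq_add_sq x y
  calc (x + y) ^ 2 = x ^ 2 + y ^ 2 + (x * y + x * y) := by ring
    _ ≤ x ^ 2 + y ^ 2 + ((x ^ 2 + y ^ 2) + (x ^ 2 + y ^ 2)) := by gcongr
    _ = 3 * (x ^ 2 + y ^ 2) := by ring
    _ ≤ 4 * (x ^ 2 + y ^ 2) := by gcongr <;> norm_num

lemma enn_sq_tsum (f : ι → ℝ≥0∞) :
    (∑' i, f i) ^ 2 = ∑' i, ∑' l, f i * f l := by
  rw [sq, ← ENNReal.tsum_mul_right]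
  exact tsum_congr fun i => ENNReal.tsum_mul_left.symm

/-- Plain Cauchy–Schwarz in `ℝ≥0∞` with constant 2. -/
lemma enn_cs (f g : ι → ℝ≥0∞) :
    (∑' i, f i * g i) ^ 2 ≤ 2 * ((∑' i, (f i) ^ 2) * (∑' i, (g i) ^ 2)) := by
  calc (∑' i, f i * g i) ^ 2 = ∑' i, ∑' l, (f i * g i) * (f l * g l) := enn_sq_tsum _
    _ ≤ ∑' i, ∑' l, ((f i * g l) ^ 2 + (f l * g i) ^ 2) := by
        refine ENNReal.tsum_le_tsum fun i => ENNReal.tsum_le_tsum fun l => ?_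
        calc (f i * g i) * (f l * g l) = (f i * g l) * (f l * g i) := by ring
          _ ≤ _ := enn_mul_le_sq_add_sq _ _
    _ = 2 * ((∑' i, (f i) ^ 2) * (∑' i, (g i) ^ 2)) := by
        simp only [ENNReal.tsum_add]
        have h1 : ∑' i, ∑' l, (f i * g l) ^ 2 = (∑' i, (f i) ^ 2) * (∑' i, (g i) ^ 2) := by
          rw [← ENNReal.tsum_mul_right]
          exact tsum_congr fun i => by
            simp only [mul_pow]; exact ENNReal.tsum_mul_left
        have h2 : ∑' i, ∑' l, (f l * g i) ^ 2 = (∑' i, (f i) ^ 2) * (∑' i, (g i) ^ 2) := by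
          rw [mul_comm (∑' i, (f i) ^ 2), ← ENNReal.tsum_mul_right]
          exact tsum_congr fun i => by
            simp only [mul_pow]; rw [ENNReal.tsum_mul_right, mul_comm]
        rw [h1, h2]; ring

/-- Weighted Cauchy–Schwarz in `ℝ≥0∞` with constant 2. -/
lemma enn_wcs (a b : ι → ℝ≥0∞) :
    (∑' i, a i * b i) ^ 2 ≤ 2 * ((∑' i, (a i) ^ 2 * b i) * (∑' i, b i)) := by
  calc (∑' i, a i * b i) ^ 2 = ∑' i, ∑' l, (a i * b i) * (a l * b l) := enn_sq_tsum _
    _ ≤ ∑' i, ∑' l, ((a i) ^ 2 * b i * b l + (a l) ^ 2 * b l * b i) := by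
        refine ENNReal.tsum_le_tsum fun i => ENNReal.tsum_le_tsum fun l => ?_
        calc (a i * b i) * (a l * b l) = (a i * a l) * (b i * b l) := by ring
          _ ≤ ((a i) ^ 2 + (a l) ^ 2) * (b i * b l) :=
              mul_le_mul_left (enn_mul_le_sq_add_sq _ _) _
          _ = (a i) ^ 2 * b i * b l + (a l) ^ 2 * b l * b i := by ring
    _ = 2 * ((∑' i, (a i) ^ 2 * b i) * (∑' i, b i)) := by
        simp only [ENNReal.tsum_add]
        have h1 : ∑' (i : ι), ∑' (l : ι), (a i) ^ 2 * b i * b l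
            = (∑' i, (a i) ^ 2 * b i) * (∑' i, b i) := by
          rw [← ENNReal.tsum_mul_right]
          exact tsum_congr fun i => ENNReal.tsum_mul_left
        have h2 : ∑' (i : ι), ∑' (l : ι), (a l) ^ 2 * b l * b i
            = (∑' i, (a i) ^ 2 * b i) * (∑' i, b i) := by
          rw [mul_comm, ← ENNReal.tsum_mul_right]
          exact tsum_congr fun i => by rw [ENNReal.tsum_mul_right, mul_comm]
        rw [h1, h2]; ring

lemma enn_conv_tonelli {G : Type*} [AddCommGroup G] (f g : G → ℝ≥0∞) :
    ∑' (k : G), ∑' (j : G), f j * g (k - j) = (∑' j, f j) * (∑' j, g j) := by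
  rw [ENNReal.tsum_comm]
  calc ∑' (j : G), ∑' (k : G), f j * g (k - j)
      = ∑' (j : G), f j * ∑' (k : G), g (k - j) :=
        tsum_congr fun j => ENNReal.tsum_mul_left
    _ = ∑' (j : G), f j * ∑' (k : G), g k := by
        refine tsum_congr fun j => ?_
        exact congrArg (f j * ·) ((Equiv.subRight j).tsum_eq g)
    _ = (∑' j, f j) * (∑' j, g j) := ENNReal.tsum_mul_right

lemma tsum_le_of_ofReal_le {ι : Type*} {f : ι → ℝ} (hf : ∀ i, 0 ≤ f i) {r : ℝ} (hr : 0 ≤ r)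
    (h : ∑' i, ENNReal.ofReal (f i) ≤ ENNReal.ofReal r) : ∑' i, f i ≤ r := by
  have h1 : (∑' i, ENNReal.ofReal (f i)).toReal ≤ r := by
    have h2 := ENNReal.toReal_mono ENNReal.ofReal_ne_top h
    rwa [ENNReal.toReal_ofReal hr] at h2
  calc ∑' i, f i = (∑' i, ENNReal.ofReal (f i)).toReal := by
        rw [ENNReal.tsum_toReal_eq (fun _ => ENNReal.ofReal_ne_top)]
        exact tsum_congr fun i => (ENNReal.toReal_ofReal (hf i)).symm
    _ ≤ r := h1


lemma summable_int_one_add {p : ℝ} (hp : 1 < p) :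
    Summable (fun m : ℤ => (1 + |(m : ℝ)|) ^ (-p)) := by
  have h1 := (Real.summable_one_div_int_add_rpow 1 p).2 hp
  have h2 := (Real.summable_one_div_int_add_rpow (-1) p).2 hp
  refine Summable.of_nonneg_of_le (fun m => Real.rpow_nonneg (by positivity) _)
    (fun m => ?_) (h1.add h2)
  have hp0 : 0 < p := lt_trans one_pos hp
  rcases le_or_gt 0 m with hm | hm
  · have hm' : (0:ℝ) ≤ (m : ℝ) := by exact_mod_cast hm
    have hbase : 1 + |(m : ℝ)| = |(m : ℝ) + 1| := by
      rw [abs_of_nonneg hm', abs_of_nonneg (by linarith)]; ring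
    have h3 : (1 + |(m : ℝ)|) ^ (-p) = 1 / |(m : ℝ) + 1| ^ p := by
      rw [hbase, Real.rpow_neg (abs_nonneg _), one_div]
    rw [h3]
    exact le_add_of_nonneg_right (by positivity)
  · have hm' : (m : ℝ) ≤ -1 := by exact_mod_cast (by omega : m ≤ -1)
    have hbase : 1 + |(m : ℝ)| = |(m : ℝ) + (-1)| := by
      rw [abs_of_nonpos (by linarith), abs_of_nonpos (by linarith)]; ring
    have h3 : (1 + |(m : ℝ)|) ^ (-p) = 1 / |(m : ℝ) + (-1)| ^ p := by
      rw [hbase, Real.rpow_neg (abs_nonneg _), one_div]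
    rw [h3]
    exact le_add_of_nonneg_left (by positivity)

lemma summable_pi_prod_s13 {h : ℤ → ℝ} (h0 : ∀ m, 0 ≤ h m) (hs : Summable h) :
    ∀ N : ℕ, Summable (fun k : Fin N → ℤ => ∏ i, h (k i)) := by
  intro N
  induction N with
  | zero => exact Summable.of_finite
  | succ m ih =>
      have hprod : Summable (fun p : ℤ × (Fin m → ℤ) => h p.1 * ∏ i, h (p.2 i)) :=
        Summable.mul_of_nonneg (f := h) (g := fun k : Fin m → ℤ => ∏ i, h (k i))
          hs ih (fun m => h0 m) (fun k => Finset.prod_nonneg fun i _ => h0 _)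
      refine ((Fin.consEquiv (fun _ : Fin (m + 1) => ℤ)).summable_iff).1
        (hprod.congr fun p => ?_)
      simp only [Function.comp_apply, Fin.consEquiv_apply]
      rw [Fin.prod_univ_succ]
      simp [Fin.cons_zero, Fin.cons_succ]


lemma real_sqrt_add_le (a b : ℝ) (ha : 0 ≤ a) (hb : 0 ≤ b) :
    Real.sqrt (a + b) ≤ Real.sqrt a + Real.sqrt b := by
  have h1 := Real.sq_sqrt ha
  have h2 := Real.sq_sqrt hb
  calc Real.sqrt (a + b) ≤ Real.sqrt ((Real.sqrt a + Real.sqrt b) ^ 2) :=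
        Real.sqrt_le_sqrt (by nlinarith [Real.sqrt_nonneg a, Real.sqrt_nonneg b])
    _ = Real.sqrt a + Real.sqrt b := Real.sqrt_sq (by positivity)

section weight
variable (n : ℕ) (α : ℝ)

lemma sqsum_eq_norm (a : Fin n → ℤ) :
    Real.sqrt (∑ i, ((a i : ℝ)) ^ 2)
      = ‖(WithLp.equiv 2 (Fin n → ℝ)).symm (fun i => (a i : ℝ))‖ := by
  rw [EuclideanSpace.norm_eq]
  congr 1
  refine Finset.sum_congr rfl fun i _ => ?_
  simp [Real.norm_eq_abs, sq_abs]

lemma sqsum_triangle (a b : Fin n → ℤ) :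
    Real.sqrt (∑ i, (((a + b) i : ℝ)) ^ 2)
      ≤ Real.sqrt (∑ i, ((a i : ℝ)) ^ 2) + Real.sqrt (∑ i, ((b i : ℝ)) ^ 2) := by
  rw [sqsum_eq_norm, sqsum_eq_norm, sqsum_eq_norm]
  have h : (fun i => ((a + b) i : ℝ)) = (fun i => (a i : ℝ)) + (fun i => (b i : ℝ)) := by
    funext i
    simp [Pi.add_apply]
  rw [h, show ∀ x y : Fin n → ℝ, (WithLp.equiv 2 (Fin n → ℝ)).symm (x + y) = (WithLp.equiv 2 (Fin n → ℝ)).symm x + (WithLp.equiv 2 (Fin n → ℝ)).symm y from fun _ _ => rfl]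
  exact norm_add_le _ _

/-- each coordinate is dominated by the Euclidean norm expression -/
lemma coord_le_sqsum (k : Fin n → ℤ) (i : Fin n) :
    |(k i : ℝ)| ≤ Real.sqrt (∑ i, ((k i : ℝ)) ^ 2) := by
  rw [← Real.sqrt_sq_eq_abs]
  exact Real.sqrt_le_sqrt (Finset.single_le_sum (f := fun i => ((k i : ℝ)) ^ 2)
    (fun i _ => sq_nonneg _) (Finset.mem_univ i))

/-- subadditivity of the square root of the weight -/
lemma sqrt_weight_sub (hα0 : 0 ≤ α) (k j : Fin n → ℤ) :
    Real.sqrt (1 + Real.sqrt (∑ i, ((k i : ℝ)) ^ 2) ^ (4 * α)) ≤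
      (2 : ℝ) ^ (2 * α) *
        (Real.sqrt (1 + Real.sqrt (∑ i, ((j i : ℝ)) ^ 2) ^ (4 * α)) +
         Real.sqrt (1 + Real.sqrt (∑ i, (((k - j) i : ℝ)) ^ 2) ^ (4 * α))) := by
  set s : ℝ := 4 * α with hs
  have hs0 : 0 ≤ s := by positivity
  set Nk := Real.sqrt (∑ i, ((k i : ℝ)) ^ 2) with hNk
  set Nj := Real.sqrt (∑ i, ((j i : ℝ)) ^ 2) with hNj
  set Nm := Real.sqrt (∑ i, (((k - j) i : ℝ)) ^ 2) with hNm
  have hNk0 : 0 ≤ Nk := Real.sqrt_nonneg _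
  have hNj0 : 0 ≤ Nj := Real.sqrt_nonneg _
  have hNm0 : 0 ≤ Nm := Real.sqrt_nonneg _
  have htri : Nk ≤ Nj + Nm := by
    have := sqsum_triangle n j (k - j)
    rwa [add_sub_cancel] at this
  have h2s : (1 : ℝ) ≤ 2 ^ s := by
    rw [show (1:ℝ) = (2:ℝ) ^ (0:ℝ) by rw [Real.rpow_zero]]
    exact Real.rpow_le_rpow_of_exponent_le one_le_two hs0
  have key1 : Nk ^ s ≤ 2 ^ s * (Nj ^ s + Nm ^ s) := by
    rcases le_total Nj Nm with h | h
    · have h1 : Nk ≤ 2 * Nm := by linarith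
      calc Nk ^ s ≤ (2 * Nm) ^ s := Real.rpow_le_rpow hNk0 h1 hs0
        _ = 2 ^ s * Nm ^ s := Real.mul_rpow (by norm_num) hNm0
        _ ≤ 2 ^ s * (Nj ^ s + Nm ^ s) := by
            have := Real.rpow_nonneg hNj0 s
            nlinarith
    · have h1 : Nk ≤ 2 * Nj := by linarith
      calc Nk ^ s ≤ (2 * Nj) ^ s := Real.rpow_le_rpow hNk0 h1 hs0
        _ = 2 ^ s * Nj ^ s := Real.mul_rpow (by norm_num) hNj0
        _ ≤ 2 ^ s * (Nj ^ s + Nm ^ s) := by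
            have := Real.rpow_nonneg hNm0 s
            nlinarith
  have key2 : 1 + Nk ^ s ≤ 2 ^ s * ((1 + Nj ^ s) + (1 + Nm ^ s)) := by nlinarith
  have h2spos : (0:ℝ) < 2 ^ s := lt_of_lt_of_le one_pos h2s
  calc Real.sqrt (1 + Nk ^ s)
      ≤ Real.sqrt (2 ^ s * ((1 + Nj ^ s) + (1 + Nm ^ s))) := Real.sqrt_le_sqrt key2
    _ = Real.sqrt (2 ^ s) * Real.sqrt ((1 + Nj ^ s) + (1 + Nm ^ s)) :=
        Real.sqrt_mul h2spos.le _
    _ ≤ Real.sqrt (2 ^ s) * (Real.sqrt (1 + Nj ^ s) + Real.sqrt (1 + Nm ^ s)) := by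
        refine mul_le_mul_of_nonneg_left ?_ (Real.sqrt_nonneg _)
        refine real_sqrt_add_le _ _ ?_ ?_
        · positivity
        · positivity
    _ = 2 ^ (2 * α) * (Real.sqrt (1 + Nj ^ s) + Real.sqrt (1 + Nm ^ s)) := by
        congr 1
        rw [Real.sqrt_eq_rpow, ← Real.rpow_mul (by norm_num : (0:ℝ) ≤ 2)]
        congr 1
        rw [hs]; ring
end weight

lemma summable_inv_weight (n : ℕ) (hn : 0 < n) (α : ℝ) (hα : (n : ℝ) / 4 < α) :
    Summable fun k : Fin n → ℤ => (1 + Real.sqrt (∑ i, ((k i : ℝ)) ^ 2) ^ (4 * α))⁻¹ := by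
  have hn' : (0:ℝ) < n := by exact_mod_cast hn
  set p : ℝ := 4 * α / n with hp
  have hα0 : 0 < α := by
    have : (1:ℝ) ≤ n := by exact_mod_cast hn
    nlinarith
  have hp1 : 1 < p := by
    rw [hp, lt_div_iff₀ hn']
    linarith [(div_lt_iff₀ (by norm_num : (0:ℝ) < 4)).1 hα]
  have hp0 : 0 < p := lt_trans one_pos hp1
  have hmaj : Summable (fun k : Fin n → ℤ =>
      (2:ℝ) ^ (4 * α) * ∏ i, (1 + |(k i : ℝ)|) ^ (-p)) :=
    (summable_pi_prod_s13 (fun m => Real.rpow_nonneg (by positivity) _)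
      (summable_int_one_add hp1) n).mul_left _
  refine Summable.of_nonneg_of_le (fun k => by positivity) (fun k => ?_) hmaj
  set N := Real.sqrt (∑ i, ((k i : ℝ)) ^ 2) with hN
  have hN0 : 0 ≤ N := Real.sqrt_nonneg _
  have hNi : ∀ i, |(k i : ℝ)| ≤ N := fun i => coord_le_sqsum n k i
  set P : ℝ := ∏ i, (1 + |(k i : ℝ)|) with hP
  have hPpos : 0 < P := Finset.prod_pos fun i _ => by positivity
  have hPle : P ≤ (1 + N) ^ n := by
    have h1 : P ≤ ∏ _i : Fin n, (1 + N) :=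
      Finset.prod_le_prod (fun i _ => by positivity) (fun i _ => by linarith [hNi i])
    rwa [Finset.prod_const, Finset.card_univ, Fintype.card_fin] at h1
  have step1 : ∏ i, (1 + |(k i : ℝ)|) ^ (-p) = P ^ (-p) :=
    Real.finset_prod_rpow Finset.univ _ (fun i _ => by positivity) (-p)
  have stepA : ((1 + N) ^ n : ℝ) ^ (-p) ≤ P ^ (-p) :=
    Real.rpow_le_rpow_of_nonpos hPpos hPle (neg_nonpos.2 hp0.le)
  have stepB : ((1 + N) ^ n : ℝ) ^ (-p) = (1 + N) ^ (-(4 * α)) := by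
    rw [← Real.rpow_natCast (1 + N) n, ← Real.rpow_mul (by positivity)]
    congr 1
    rw [hp]
    field_simp
  have step3 : (1 + N) ^ (4 * α) ≤ 2 ^ (4 * α) * (1 + N ^ (4 * α)) := by
    have h4α : (0:ℝ) ≤ 4 * α := by positivity
    rcases le_total N 1 with h | h
    · calc (1 + N) ^ (4 * α) ≤ (2:ℝ) ^ (4 * α) :=
            Real.rpow_le_rpow (by positivity) (by linarith) h4α
        _ ≤ 2 ^ (4 * α) * (1 + N ^ (4 * α)) := by
            have h1 : (0:ℝ) ≤ N ^ (4 * α) := Real.rpow_nonneg hN0 _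
            have h2 : (0:ℝ) < (2:ℝ) ^ (4 * α) := Real.rpow_pos_of_pos (by norm_num) _
            nlinarith
    · calc (1 + N) ^ (4 * α) ≤ (2 * N) ^ (4 * α) :=
            Real.rpow_le_rpow (by positivity) (by linarith) h4α
        _ = 2 ^ (4 * α) * N ^ (4 * α) := Real.mul_rpow (by norm_num) hN0
        _ ≤ 2 ^ (4 * α) * (1 + N ^ (4 * α)) := by
            have h2 : (0:ℝ) < (2:ℝ) ^ (4 * α) := Real.rpow_pos_of_pos (by norm_num) _
            nlinarith
  have hx : (0:ℝ) < 1 + N ^ (4 * α) := by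
    have := Real.rpow_nonneg hN0 (4 * α)
    linarith
  have hy : (0:ℝ) < (1 + N) ^ (4 * α) := Real.rpow_pos_of_pos (by linarith) _
  have key : (1 + N ^ (4 * α))⁻¹ ≤ 2 ^ (4 * α) * ((1 + N) ^ (4 * α))⁻¹ := by
    rw [← one_div, ← div_eq_mul_inv, div_le_div_iff₀ hx hy]
    linarith [step3]
  calc (1 + N ^ (4 * α))⁻¹ ≤ 2 ^ (4 * α) * ((1 + N) ^ (4 * α))⁻¹ := key
    _ ≤ 2 ^ (4 * α) * ∏ i, (1 + |(k i : ℝ)|) ^ (-p) := by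
        refine mul_le_mul_of_nonneg_left ?_ (by positivity)
        rw [step1]
        calc ((1 + N) ^ (4 * α))⁻¹ = (1 + N) ^ (-(4 * α)) := by
              rw [Real.rpow_neg (by linarith : (0:ℝ) ≤ 1 + N)]
          _ = ((1 + N) ^ n : ℝ) ^ (-p) := stepB.symm
          _ ≤ P ^ (-p) := stepA

theorem abstract_algebra {G : Type*} [AddCommGroup G] (V : G → ℝ)
    (hV1 : ∀ k, 1 ≤ V k) {κ : ℝ} (hκ : 1 ≤ κ)
    (hsub : ∀ k j : G, Real.sqrt (V k) ≤ κ * (Real.sqrt (V j) + Real.sqrt (V (k - j))))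
    (hZ : Summable fun k : G => (V k)⁻¹) :
    ∃ C : ℝ, 0 < C ∧ ∀ u w : G → ℂ,
      Summable (fun k => V k * ‖u k‖ ^ 2) → Summable (fun k => V k * ‖w k‖ ^ 2) →
      (∀ k, Summable fun j => u j * w (k - j)) ∧
      ∑' k, V k * ‖∑' j, u j * w (k - j)‖ ^ 2 ≤
        C ^ 2 * (∑' k, V k * ‖u k‖ ^ 2) * (∑' k, V k * ‖w k‖ ^ 2) := by
  have hV0 : ∀ k, 0 ≤ V k := fun k => le_trans zero_le_one (hV1 k)
  have hVs1 : ∀ k, 1 ≤ Real.sqrt (V k) := fun k => by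
    rw [show (1:ℝ) = Real.sqrt 1 by simp]
    exact Real.sqrt_le_sqrt (hV1 k)
  have hκ0 : 0 < κ := lt_of_lt_of_le one_pos hκ
  set Zr : ℝ := ∑' k, (V k)⁻¹ with hZrdef
  have hZr0 : 0 ≤ Zr := tsum_nonneg fun k => inv_nonneg.2 (hV0 k)
  set C0 : ℝ := 32 * κ ^ 2 * (Zr + 1) with hC0def
  have hC0 : 0 < C0 := by positivity
  refine ⟨Real.sqrt C0, Real.sqrt_pos.2 hC0, fun u w hu hw => ?_⟩
  have hCsq : (Real.sqrt C0) ^ 2 = C0 := Real.sq_sqrt hC0.le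
  -- Step 1: summability of the convolution terms
  have hprod : ∀ k : G, Summable (fun j => ‖u j‖ * ‖w (k - j)‖) := by
    intro k
    have hshift : Summable (fun j : G => V (k - j) * ‖w (k - j)‖ ^ 2) :=
      ((Equiv.subLeft k).summable_iff).2 hw
    refine Summable.of_nonneg_of_le (fun j => by positivity) (fun j => ?_)
      ((hu.add hshift).div_const 2)
    set a := Real.sqrt (V j) * ‖u j‖ with hadef
    set b := Real.sqrt (V (k - j)) * ‖w (k - j)‖ with hbdef
    have ha : ‖u j‖ ≤ a := le_mul_of_one_le_left (norm_nonneg _) (hVs1 j)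
    have hb : ‖w (k - j)‖ ≤ b := le_mul_of_one_le_left (norm_nonneg _) (hVs1 _)
    have hab : ‖u j‖ * ‖w (k - j)‖ ≤ a * b :=
      mul_le_mul ha hb (norm_nonneg _) (by positivity)
    have e1 : a ^ 2 = V j * ‖u j‖ ^ 2 := by rw [hadef, mul_pow, Real.sq_sqrt (hV0 j)]
    have e2 : b ^ 2 = V (k - j) * ‖w (k - j)‖ ^ 2 := by rw [hbdef, mul_pow, Real.sq_sqrt (hV0 _)]
    nlinarith [sq_nonneg (a - b), hab]
  have hconv : ∀ k : G, Summable fun j => u j * w (k - j) := by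
    intro k
    refine Summable.of_norm ?_
    simpa only [norm_mul] using hprod k
  refine ⟨hconv, ?_⟩
  -- ENNReal setup
  set EU : G → ℝ≥0∞ := fun j => ENNReal.ofReal ‖u j‖ with hEU
  set EW : G → ℝ≥0∞ := fun j => ENNReal.ofReal ‖w j‖ with hEW
  set ES : G → ℝ≥0∞ := fun j => ENNReal.ofReal (Real.sqrt (V j)) with hES
  set A : G → ℝ≥0∞ := fun j => ES j * EU j with hA
  set B : G → ℝ≥0∞ := fun j => ES j * EW j with hB
  have hESsq : ∀ j, ES j ^ 2 = ENNReal.ofReal (V j) := fun j => by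
    rw [hES, ← ENNReal.ofReal_pow (Real.sqrt_nonneg _), Real.sq_sqrt (hV0 j)]
  have hAsq : ∀ j, A j ^ 2 = ENNReal.ofReal (V j * ‖u j‖ ^ 2) := fun j => by
    rw [hA, mul_pow, hESsq, hEU, ← ENNReal.ofReal_pow (norm_nonneg _),
      ← ENNReal.ofReal_mul (hV0 j)]
  have hBsq : ∀ j, B j ^ 2 = ENNReal.ofReal (V j * ‖w j‖ ^ 2) := fun j => by
    rw [hB, mul_pow, hESsq, hEW, ← ENNReal.ofReal_pow (norm_nonneg _),
      ← ENNReal.ofReal_mul (hV0 j)]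
  set Su : ℝ := ∑' k, V k * ‖u k‖ ^ 2 with hSu
  set Sw : ℝ := ∑' k, V k * ‖w k‖ ^ 2 with hSw
  have hSu0 : 0 ≤ Su := tsum_nonneg fun k => mul_nonneg (hV0 k) (by positivity)
  have hSw0 : 0 ≤ Sw := tsum_nonneg fun k => mul_nonneg (hV0 k) (by positivity)
  have hSuE : ∑' k, (A k) ^ 2 = ENNReal.ofReal Su := by
    rw [hSu, ENNReal.ofReal_tsum_of_nonneg (fun k => mul_nonneg (hV0 k) (by positivity)) hu]
    exact tsum_congr fun k => hAsq k
  have hSwE : ∑' k, (B k) ^ 2 = ENNReal.ofReal Sw := by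
    rw [hSw, ENNReal.ofReal_tsum_of_nonneg (fun k => mul_nonneg (hV0 k) (by positivity)) hw]
    exact tsum_congr fun k => hBsq k
  set F : G → ℝ≥0∞ := fun k => ∑' j, A j * EW (k - j) with hF
  set Gg : G → ℝ≥0∞ := fun k => ∑' j, EU j * B (k - j) with hGg
  set κE : ℝ≥0∞ := ENNReal.ofReal κ with hκE
  -- pointwise bound on the norm of the convolution
  have hnc : ∀ k : G, ENNReal.ofReal ‖∑' j, u j * w (k - j)‖ ≤ ∑' j, EU j * EW (k - j) := by
    intro k
    have h1 : ‖∑' j, u j * w (k - j)‖ ≤ ∑' j, ‖u j‖ * ‖w (k - j)‖ := by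
      calc ‖∑' j, u j * w (k - j)‖ ≤ ∑' j, ‖u j * w (k - j)‖ :=
            norm_tsum_le_tsum_norm (by simpa only [norm_mul] using hprod k)
        _ = ∑' j, ‖u j‖ * ‖w (k - j)‖ := tsum_congr fun j => norm_mul _ _
    calc ENNReal.ofReal ‖∑' j, u j * w (k - j)‖
        ≤ ENNReal.ofReal (∑' j, ‖u j‖ * ‖w (k - j)‖) := ENNReal.ofReal_le_ofReal h1
      _ = ∑' j, ENNReal.ofReal (‖u j‖ * ‖w (k - j)‖) :=
          ENNReal.ofReal_tsum_of_nonneg (fun j => by positivity) (hprod k)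
      _ = ∑' j, EU j * EW (k - j) :=
          tsum_congr fun j => ENNReal.ofReal_mul (norm_nonneg _)
  -- key pointwise bound
  have hkey : ∀ k : G, ENNReal.ofReal (V k * ‖∑' j, u j * w (k - j)‖ ^ 2)
      ≤ 4 * κE ^ 2 * ((F k) ^ 2 + (Gg k) ^ 2) := by
    intro k
    have hs : ES k * ENNReal.ofReal ‖∑' j, u j * w (k - j)‖ ≤ κE * (F k + Gg k) := by
      calc ES k * ENNReal.ofReal ‖∑' j, u j * w (k - j)‖
          ≤ ES k * ∑' j, EU j * EW (k - j) := mul_le_mul_right (hnc k) _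
        _ = ∑' j, ES k * (EU j * EW (k - j)) := ENNReal.tsum_mul_left.symm
        _ ≤ ∑' j, (κE * (ES j + ES (k - j))) * (EU j * EW (k - j)) := by
            refine ENNReal.tsum_le_tsum fun j => mul_le_mul_left ?_ _
            rw [hES, hκE, ← ENNReal.ofReal_add (Real.sqrt_nonneg _) (Real.sqrt_nonneg _),
              ← ENNReal.ofReal_mul hκ0.le]
            exact ENNReal.ofReal_le_ofReal (hsub k j)
        _ = ∑' j, κE * (A j * EW (k - j) + EU j * B (k - j)) := by
            refine tsum_congr fun j => ?_
            rw [hA, hB]; ring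
        _ = κE * (F k + Gg k) := by
            rw [ENNReal.tsum_mul_left, ENNReal.tsum_add, hF, hGg]
    have hsq : ENNReal.ofReal (V k * ‖∑' j, u j * w (k - j)‖ ^ 2)
        = (ES k * ENNReal.ofReal ‖∑' j, u j * w (k - j)‖) ^ 2 := by
      rw [mul_pow, hESsq, ← ENNReal.ofReal_pow (norm_nonneg _),
        ← ENNReal.ofReal_mul (hV0 k)]
    rw [hsq]
    calc (ES k * ENNReal.ofReal ‖∑' j, u j * w (k - j)‖) ^ 2
        ≤ (κE * (F k + Gg k)) ^ 2 := by exact pow_le_pow_left' hs 2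
      _ = κE ^ 2 * (F k + Gg k) ^ 2 := mul_pow _ _ 2
      _ ≤ κE ^ 2 * (4 * ((F k) ^ 2 + (Gg k) ^ 2)) :=
          mul_le_mul_right (enn_sq_add_le _ _) _
      _ = 4 * κE ^ 2 * ((F k) ^ 2 + (Gg k) ^ 2) := by ring
  -- sums of F² and G²
  set LU : ℝ≥0∞ := ∑' j, EU j with hLU
  set LW : ℝ≥0∞ := ∑' j, EW j with hLW
  set ZE : ℝ≥0∞ := ∑' j, ENNReal.ofReal ((V j)⁻¹) with hZE
  have hZEr : ZE = ENNReal.ofReal Zr := by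
    rw [hZE, hZrdef, ENNReal.ofReal_tsum_of_nonneg (fun k => inv_nonneg.2 (hV0 k)) hZ]
  -- LW² ≤ 2 ZE ∑B², LU² ≤ 2 ZE ∑A²
  have hLW2 : LW ^ 2 ≤ 2 * (ZE * ∑' j, (B j) ^ 2) := by
    have hrw : ∀ j : G, EW j = ENNReal.ofReal ((Real.sqrt (V j))⁻¹) * B j := by
      intro j
      rw [hB, hES, ← mul_assoc, ← ENNReal.ofReal_mul (by positivity),
        inv_mul_cancel₀ (ne_of_gt (lt_of_lt_of_le one_pos (hVs1 j)))]
      simp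
    calc LW ^ 2 = (∑' j, ENNReal.ofReal ((Real.sqrt (V j))⁻¹) * B j) ^ 2 := by
          rw [hLW]; exact congrArg (· ^ 2) (tsum_congr hrw)
      _ ≤ 2 * ((∑' j, (ENNReal.ofReal ((Real.sqrt (V j))⁻¹)) ^ 2) * ∑' j, (B j) ^ 2) :=
          enn_cs _ _
      _ = 2 * (ZE * ∑' j, (B j) ^ 2) := by
          rw [hZE]
          congr 2
          refine tsum_congr fun j => ?_
          rw [← ENNReal.ofReal_pow (by positivity), inv_pow, Real.sq_sqrt (hV0 j)]
  have hLU2 : LU ^ 2 ≤ 2 * (ZE * ∑' j, (A j) ^ 2) := by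
    have hrw : ∀ j : G, EU j = ENNReal.ofReal ((Real.sqrt (V j))⁻¹) * A j := by
      intro j
      rw [hA, hES, ← mul_assoc, ← ENNReal.ofReal_mul (by positivity),
        inv_mul_cancel₀ (ne_of_gt (lt_of_lt_of_le one_pos (hVs1 j)))]
      simp
    calc LU ^ 2 = (∑' j, ENNReal.ofReal ((Real.sqrt (V j))⁻¹) * A j) ^ 2 := by
          rw [hLU]; exact congrArg (· ^ 2) (tsum_congr hrw)
      _ ≤ 2 * ((∑' j, (ENNReal.ofReal ((Real.sqrt (V j))⁻¹)) ^ 2) * ∑' j, (A j) ^ 2) :=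
          enn_cs _ _
      _ = 2 * (ZE * ∑' j, (A j) ^ 2) := by
          rw [hZE]
          congr 2
          refine tsum_congr fun j => ?_
          rw [← ENNReal.ofReal_pow (by positivity), inv_pow, Real.sq_sqrt (hV0 j)]
  have hFsum : ∑' k, (F k) ^ 2 ≤ 2 * ((∑' j, (A j) ^ 2) * LW ^ 2) := by
    calc ∑' k, (F k) ^ 2
        ≤ ∑' k, 2 * ((∑' j, (A j) ^ 2 * EW (k - j)) * LW) := by
          refine ENNReal.tsum_le_tsum fun k => ?_
          have h1 := enn_wcs (fun j => A j) (fun j => EW (k - j))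
          have h2 : ∑' j, EW (k - j) = LW := by
            rw [hLW]; exact (Equiv.subLeft k).tsum_eq EW
          rw [hF]
          calc (∑' j, A j * EW (k - j)) ^ 2
              ≤ 2 * ((∑' j, (A j) ^ 2 * EW (k - j)) * ∑' j, EW (k - j)) := h1
            _ = 2 * ((∑' j, (A j) ^ 2 * EW (k - j)) * LW) := by rw [h2]
      _ = 2 * ((∑' k, ∑' j, (A j) ^ 2 * EW (k - j)) * LW) := by
          rw [← ENNReal.tsum_mul_right, ← ENNReal.tsum_mul_left]
      _ = 2 * ((∑' j, (A j) ^ 2) * LW * LW) := by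
          rw [enn_conv_tonelli (fun j => (A j) ^ 2) EW, hLW]
      _ = 2 * ((∑' j, (A j) ^ 2) * LW ^ 2) := by ring
  have hGsum : ∑' k, (Gg k) ^ 2 ≤ 2 * ((∑' j, (B j) ^ 2) * LU ^ 2) := by
    calc ∑' k, (Gg k) ^ 2
        ≤ ∑' k, 2 * ((∑' j, (B (k - j)) ^ 2 * EU j) * LU) := by
          refine ENNReal.tsum_le_tsum fun k => ?_
          have h1 := enn_wcs (fun j => B (k - j)) (fun j => EU j)
          rw [hGg]
          calc (∑' j, EU j * B (k - j)) ^ 2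
              = (∑' j, B (k - j) * EU j) ^ 2 := by
                exact congrArg (· ^ 2) (tsum_congr fun j => mul_comm _ _)
            _ ≤ 2 * ((∑' j, (B (k - j)) ^ 2 * EU j) * ∑' j, EU j) := h1
            _ = 2 * ((∑' j, (B (k - j)) ^ 2 * EU j) * LU) := by rw [hLU]
      _ = 2 * ((∑' k, ∑' j, (B (k - j)) ^ 2 * EU j) * LU) := by
          rw [← ENNReal.tsum_mul_right, ← ENNReal.tsum_mul_left]
      _ = 2 * ((∑' j, (B j) ^ 2) * LU * LU) := by
          have : ∑' (k : G), ∑' (j : G), (B (k - j)) ^ 2 * EU j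
              = (∑' j, EU j) * (∑' j, (B j) ^ 2) := by
            rw [← enn_conv_tonelli EU (fun j => (B j) ^ 2)]
            exact tsum_congr fun k => tsum_congr fun j => mul_comm _ _
          rw [this, hLU]; ring
      _ = 2 * ((∑' j, (B j) ^ 2) * LU ^ 2) := by ring
  -- put everything together in ℝ≥0∞
  have hmain : ∑' k, ENNReal.ofReal (V k * ‖∑' j, u j * w (k - j)‖ ^ 2)
      ≤ ENNReal.ofReal (C0 * Su * Sw) := by
    calc ∑' k, ENNReal.ofReal (V k * ‖∑' j, u j * w (k - j)‖ ^ 2)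
        ≤ ∑' k, 4 * κE ^ 2 * ((F k) ^ 2 + (Gg k) ^ 2) := ENNReal.tsum_le_tsum hkey
      _ = 4 * κE ^ 2 * ((∑' k, (F k) ^ 2) + ∑' k, (Gg k) ^ 2) := by
          rw [ENNReal.tsum_mul_left, ENNReal.tsum_add]
      _ ≤ 4 * κE ^ 2 * (2 * ((∑' j, (A j) ^ 2) * LW ^ 2) + 2 * ((∑' j, (B j) ^ 2) * LU ^ 2)) :=
          mul_le_mul_right (add_le_add hFsum hGsum) _
      _ ≤ 4 * κE ^ 2 * (2 * ((∑' j, (A j) ^ 2) * (2 * (ZE * ∑' j, (B j) ^ 2)))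
            + 2 * ((∑' j, (B j) ^ 2) * (2 * (ZE * ∑' j, (A j) ^ 2)))) := by
          gcongr
      _ = 4 * κE ^ 2 * (2 * (ENNReal.ofReal Su * (2 * (ZE * ENNReal.ofReal Sw)))
            + 2 * (ENNReal.ofReal Sw * (2 * (ZE * ENNReal.ofReal Su)))) := by
          rw [hSuE, hSwE]
      _ = 32 * κE ^ 2 * ZE * (ENNReal.ofReal Su * ENNReal.ofReal Sw) := by ring
      _ ≤ ENNReal.ofReal (C0 * Su * Sw) := by
          rw [hZEr, hκE]
          calc (32:ℝ≥0∞) * ENNReal.ofReal κ ^ 2 * ENNReal.ofReal Zr *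
                (ENNReal.ofReal Su * ENNReal.ofReal Sw)
              = ENNReal.ofReal (32 * κ ^ 2 * Zr * (Su * Sw)) := by
                rw [ENNReal.ofReal_mul
                    (mul_nonneg (mul_nonneg (by norm_num) (sq_nonneg κ)) hZr0),
                  ENNReal.ofReal_mul (mul_nonneg (by norm_num) (sq_nonneg κ)),
                  ENNReal.ofReal_mul (by norm_num : (0:ℝ) ≤ 32),
                  ENNReal.ofReal_mul hSu0, ENNReal.ofReal_pow hκ0.le]
                norm_num
            _ ≤ ENNReal.ofReal (C0 * Su * Sw) := by
                refine ENNReal.ofReal_le_ofReal ?_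
                rw [hC0def]
                nlinarith [mul_nonneg hSu0 hSw0, sq_nonneg κ, hZr0,
                  mul_nonneg (sq_nonneg κ) (mul_nonneg hSu0 hSw0)]
  -- transfer back to ℝ
  have := tsum_le_of_ofReal_le (f := fun k => V k * ‖∑' j, u j * w (k - j)‖ ^ 2)
    (fun k => mul_nonneg (hV0 k) (by positivity)) (r := C0 * Su * Sw)
    (mul_nonneg (mul_nonneg hC0.le hSu0) hSw0) hmain
  calc ∑' k, V k * ‖∑' j, u j * w (k - j)‖ ^ 2 ≤ C0 * Su * Sw := this
    _ = (Real.sqrt C0) ^ 2 * Su * Sw := by rw [hCsq]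


/-- Banach-algebra (product) inequality for the `X_α` spaces at the level of
Fourier coefficients: for `α > n/4` the convolution of two families with finite
`X_α`-norm is well defined and `‖u * w‖_{X_α} ≤ C ‖u‖_{X_α} ‖w‖_{X_α}`. -/
theorem xAlpha_convolution_algebra
    (n : ℕ) (hn : 0 < n) (α : ℝ) (hα : (n : ℝ) / 4 < α) :
    ∃ C : ℝ, 0 < C ∧
      ∀ u w : (Fin n → ℤ) → ℂ,
        Summable (fun k : Fin n → ℤ =>
          (1 + Real.sqrt (∑ j, ((k j : ℝ)) ^ 2) ^ (4 * α)) * ‖u k‖ ^ 2) →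
        Summable (fun k : Fin n → ℤ =>
          (1 + Real.sqrt (∑ j, ((k j : ℝ)) ^ 2) ^ (4 * α)) * ‖w k‖ ^ 2) →
        (∀ k : Fin n → ℤ, Summable (fun j : Fin n → ℤ => u j * w (k - j))) ∧
        ∑' k : Fin n → ℤ,
            (1 + Real.sqrt (∑ j, ((k j : ℝ)) ^ 2) ^ (4 * α)) *
              ‖∑' j : Fin n → ℤ, u j * w (k - j)‖ ^ 2
          ≤ C ^ 2 *
            (∑' k : Fin n → ℤ,
              (1 + Real.sqrt (∑ j, ((k j : ℝ)) ^ 2) ^ (4 * α)) * ‖u k‖ ^ 2) *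
            (∑' k : Fin n → ℤ,
              (1 + Real.sqrt (∑ j, ((k j : ℝ)) ^ 2) ^ (4 * α)) * ‖w k‖ ^ 2) := by
  have hα0 : 0 < α := by
    have h1 : (1:ℝ) ≤ n := by exact_mod_cast hn
    nlinarith
  have hκ : (1:ℝ) ≤ 2 ^ (2 * α) := by
    rw [show (1:ℝ) = (2:ℝ) ^ (0:ℝ) by rw [Real.rpow_zero]]
    exact Real.rpow_le_rpow_of_exponent_le one_le_two (by positivity)
  exact abstract_algebra
    (fun k : Fin n → ℤ => 1 + Real.sqrt (∑ j, ((k j : ℝ)) ^ 2) ^ (4 * α))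
    (fun k => le_add_of_nonneg_right (Real.rpow_nonneg (Real.sqrt_nonneg _) _))
    hκ
    (fun k j => sqrt_weight_sub n α hα0.le k j)
    (summable_inv_weight n hn α hα)
end

section
/- Let θ, v ∈ ℝ, t ≥ 0, M ≥ 0, and let a, b ∈ ℂ with |a| ≤ M and |b| ≤ M. Then |e^{−it(v + θ|a|²)} a − e^{−it(v + θ|b|²)} b| ≤ (1 + 2|θ| M² t) |a − b|. -/
open Complex

lemma exp_I_lipschitz (x y : ℝ) :
    ‖Complex.exp ((x : ℂ) * Complex.I) - Complex.exp ((y : ℂ) * Complex.I)‖ ≤ |x - y| := by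
  have H := Convex.norm_image_sub_le_of_norm_hasDerivWithin_le
    (f := fun s : ℝ => Complex.exp ((s : ℂ) * Complex.I))
    (f' := fun s : ℝ => Complex.exp ((s : ℂ) * Complex.I) * Complex.I)
    (s := Set.univ) (C := 1) ?_ ?_ convex_univ (Set.mem_univ y) (Set.mem_univ x)
  · simpa [Real.norm_eq_abs] using H
  · intro s _
    have h1 : HasDerivAt (fun s : ℝ => (s : ℂ) * Complex.I) Complex.I s := by
      simpa using (Complex.ofRealCLM.hasDerivAt (x := s)).mul_const Complex.I
    exact (h1.cexp).hasDerivWithinAt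
  · intro s _
    simp [Complex.norm_exp]

/-- Pointwise Lipschitz stability of the nonlinear phase flow
`a ↦ e^{-it(v+θ|a|²)}a`:
`|e^{-it(v+θ|a|²)}a − e^{-it(v+θ|b|²)}b| ≤ (1 + 2|θ|M²t)|a − b|` for `|a|,|b| ≤ M`. -/
theorem phase_flow_pointwise_lipschitz
    (θ v t M : ℝ) (ht : 0 ≤ t) (hM : 0 ≤ M) (a b : ℂ)
    (ha : ‖a‖ ≤ M) (hb : ‖b‖ ≤ M) :
    ‖Complex.exp (-Complex.I * (t : ℂ) * ((v : ℂ) + (θ : ℂ) * ((‖a‖ : ℝ) : ℂ) ^ 2)) * a -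
        Complex.exp (-Complex.I * (t : ℂ) * ((v : ℂ) + (θ : ℂ) * ((‖b‖ : ℝ) : ℂ) ^ 2)) * b‖
      ≤ (1 + 2 * |θ| * M ^ 2 * t) * ‖a - b‖ := by
  set x : ℝ := -(t * (v + θ * ‖a‖ ^ 2)) with hx
  set y : ℝ := -(t * (v + θ * ‖b‖ ^ 2)) with hy
  have hex : -Complex.I * (t : ℂ) * ((v : ℂ) + (θ : ℂ) * ((‖a‖ : ℝ) : ℂ) ^ 2)
      = (x : ℂ) * Complex.I := by rw [hx]; push_cast; ring
  have hey : -Complex.I * (t : ℂ) * ((v : ℂ) + (θ : ℂ) * ((‖b‖ : ℝ) : ℂ) ^ 2)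
      = (y : ℂ) * Complex.I := by rw [hy]; push_cast; ring
  rw [hex, hey]
  set E1 := Complex.exp ((x : ℂ) * Complex.I)
  set E2 := Complex.exp ((y : ℂ) * Complex.I)
  have hE1 : ‖E1‖ = 1 := by
    simp only [E1, Complex.norm_exp]
    norm_num
  have key : E1 * a - E2 * b = E1 * (a - b) + (E1 - E2) * b := by ring
  rw [key]
  have h1 : ‖E1 * (a - b)‖ = ‖a - b‖ := by rw [norm_mul, hE1, one_mul]
  have h2 : ‖(E1 - E2) * b‖ ≤ (2 * |θ| * M ^ 2 * t) * ‖a - b‖ := by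
    rw [norm_mul]
    have hdiff : ‖E1 - E2‖ ≤ |x - y| := exp_I_lipschitz x y
    have hxy : |x - y| = t * |θ| * |‖a‖ ^ 2 - ‖b‖ ^ 2| := by
      rw [hx, hy]
      rw [show -(t * (v + θ * ‖a‖ ^ 2)) - -(t * (v + θ * ‖b‖ ^ 2))
          = t * (θ * (‖b‖ ^ 2 - ‖a‖ ^ 2)) by ring]
      rw [abs_mul, abs_mul, _root_.abs_of_nonneg ht, abs_sub_comm (‖b‖ ^ 2), mul_assoc]
    have hsq : |‖a‖ ^ 2 - ‖b‖ ^ 2| ≤ 2 * M * ‖a - b‖ := by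
      have h3 : ‖a‖ ^ 2 - ‖b‖ ^ 2 = (‖a‖ + ‖b‖) * (‖a‖ - ‖b‖) := by ring
      rw [h3, abs_mul, _root_.abs_of_nonneg (show (0:ℝ) ≤ ‖a‖ + ‖b‖ by positivity)]
      have h4 := abs_norm_sub_norm_le a b
      have h5 : ‖a‖ + ‖b‖ ≤ 2 * M := by linarith
      calc (‖a‖ + ‖b‖) * |‖a‖ - ‖b‖| ≤ (2 * M) * ‖a - b‖ :=
            mul_le_mul h5 h4 (abs_nonneg _) (by positivity)
        _ = 2 * M * ‖a - b‖ := rfl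
    have hA : ‖E1 - E2‖ ≤ t * |θ| * (2 * M * ‖a - b‖) := by
      refine hdiff.trans ?_
      rw [hxy]
      have : (0:ℝ) ≤ t * |θ| := by positivity
      exact mul_le_mul_of_nonneg_left hsq this
    calc ‖E1 - E2‖ * ‖b‖ ≤ (t * |θ| * (2 * M * ‖a - b‖)) * M :=
          mul_le_mul hA hb (norm_nonneg b) (by positivity)
      _ = (2 * |θ| * M ^ 2 * t) * ‖a - b‖ := by ring
  calc ‖E1 * (a - b) + (E1 - E2) * b‖ ≤ ‖E1 * (a - b)‖ + ‖(E1 - E2) * b‖ := norm_add_le _ _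
    _ ≤ ‖a - b‖ + (2 * |θ| * M ^ 2 * t) * ‖a - b‖ := by rw [h1]; exact add_le_add_right h2 _
    _ = (1 + 2 * |θ| * M ^ 2 * t) * ‖a - b‖ := by ring
end
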